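/- Let θ: 𝔻 → 𝔻 be an inner function and for α ∈ 𝕋 let μ_α be the Clark measure of θ at α, the unique positive Borel measure on 𝕋 whose Poisson integral equals (1 − |θ(z)|²)/|α − θ(z)|² on 𝔻. Then for any two distinct α, β ∈ 𝕋, the measures μ_α and μ_β are mutually singular. -/

import Mathlib

open MeasureTheory Filter Set Complex Metric
open scoped ENNReal Topology

/-- Normalized Lebesgue (arc length) measure on the unit circle in `ℂ`. -/
noncomputable def circleMeasure : Measure ℂ :=
  (ENNReal.ofReal (2 * Real.pi)⁻¹) •
    (Measure.map (fun t : ℝ => Complex.exp (t * Complex.I))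
      (volume.restrict (Ioc (0 : ℝ) (2 * Real.pi))))

/-- `f` has nontangential limit `L` at the boundary point `ζ` of the unit disk:
`f(z) → L` as `z → ζ` within every Stolz angle at `ζ`. -/
def NTLim (f : ℂ → ℂ) (ζ L : ℂ) : Prop :=
  ∀ M : ℝ, 1 < M →
    Tendsto f (𝓝[{z : ℂ | ‖z‖ < 1 ∧ ‖ζ - z‖ < M * (1 - ‖z‖)}] ζ) (𝓝 L)

section ClarkAux

lemma expI_meas : Measurable (fun t : ℝ => Complex.exp (t * Complex.I)) := by
  fun_prop

lemma circleMeasure_apply {s : Set ℂ} (hs : MeasurableSet s) :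
    circleMeasure s = (ENNReal.ofReal (2 * Real.pi)⁻¹) *
      volume ({t : ℝ | Complex.exp (t * Complex.I) ∈ s} ∩ Ioc 0 (2 * Real.pi)) := by
  rw [circleMeasure, Measure.smul_apply, Measure.map_apply expI_meas hs,
    Measure.restrict_apply (expI_meas hs)]
  rfl

lemma circleMeasure_compl_sphere : circleMeasure ((sphere (0:ℂ) 1)ᶜ) = 0 := by
  rw [circleMeasure_apply (isClosed_sphere.measurableSet.compl)]
  have : {t : ℝ | Complex.exp (t * Complex.I) ∈ (sphere (0:ℂ) 1)ᶜ} = ∅ := by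
    ext t
    simp [Complex.norm_exp_ofReal_mul_I]
  simp [this]

lemma circleMeasure_univ : circleMeasure (univ : Set ℂ) = 1 := by
  rw [circleMeasure_apply MeasurableSet.univ]
  have h : (0:ℝ) < 2 * Real.pi := by positivity
  simp only [mem_univ, setOf_true, univ_inter, Real.volume_Ioc]
  rw [← ENNReal.ofReal_mul (by positivity)]
  rw [show (2 * Real.pi  - 0) = 2 * Real.pi by ring]
  rw [inv_mul_cancel₀ (by positivity)]
  simp

instance : IsFiniteMeasure circleMeasure := ⟨by rw [circleMeasure_univ]; exact ENNReal.one_lt_top⟩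

lemma exp_I_lip (s t : ℝ) : ‖Complex.exp (t * I) - Complex.exp (s * I)‖ ≤ |t - s| := by
  have hd : ∀ u : ℝ, HasDerivAt (fun v : ℝ => Complex.exp (v * I)) (Complex.exp (u * I) * I) u := by
    intro u
    have h1 : HasDerivAt (fun v : ℝ => (v : ℂ) * I) I u := by
      simpa using (Complex.ofRealCLM.hasDerivAt (x := u)).mul_const I
    simpa using h1.cexp
  have := Convex.norm_image_sub_le_of_norm_hasDerivWithin_le
    (f := fun v : ℝ => Complex.exp (v * I)) (f' := fun u => Complex.exp (u * I) * I)
    (s := Set.univ) (C := 1)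
    (fun x _ => (hd x).hasDerivWithinAt)
    (fun x _ => by simp [Complex.norm_exp_ofReal_mul_I])
    convex_univ (mem_univ s) (mem_univ t)
  simpa [Real.norm_eq_abs] using this

lemma sphere_exp (ζ : ℂ) (hζ : ζ ∈ sphere (0:ℂ) 1) :
    ∃ s : ℝ, s ∈ Ioc 0 (2 * Real.pi) ∧ Complex.exp (s * I) = ζ := by
  have habs : ‖ζ‖ = 1 := by simpa using hζ
  have hexp : Complex.exp (Complex.arg ζ * I) = ζ := by
    have := Complex.norm_mul_exp_arg_mul_I ζ
    rw [habs] at this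
    simpa using this
  rcases le_or_gt (Complex.arg ζ) 0 with h | h
  · refine ⟨Complex.arg ζ + 2 * Real.pi, ⟨?_, ?_⟩, ?_⟩
    · have := Complex.neg_pi_lt_arg ζ
      nlinarith [Real.pi_pos]
    · nlinarith [Real.pi_pos]
    · rw [show ((Complex.arg ζ + 2 * Real.pi : ℝ) : ℂ) * I
          = Complex.arg ζ * I + 2 * Real.pi * I by push_cast; ring,
        Complex.exp_add, Complex.exp_two_pi_mul_I, mul_one, hexp]
  · exact ⟨Complex.arg ζ, ⟨h, by nlinarith [Complex.arg_le_pi ζ, Real.pi_pos]⟩, hexp⟩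

lemma circleMeasure_closedBall_ge (ζ : ℂ) (hζ : ζ ∈ sphere (0:ℂ) 1)
    {δ : ℝ} (hδ0 : 0 < δ) (hδπ : δ ≤ Real.pi) :
    ENNReal.ofReal ((2 * Real.pi)⁻¹ * δ) ≤ circleMeasure (closedBall ζ δ) := by
  obtain ⟨s, ⟨hs0, hs2π⟩, hsζ⟩ := sphere_exp ζ hζ
  rw [circleMeasure_apply measurableSet_closedBall]
  have hπ : (0:ℝ) < Real.pi := Real.pi_pos
  set J : Set ℝ := if s ≤ Real.pi then Icc s (s + δ) else Icc (s - δ) s with hJ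
  have hJsub : J ⊆ {t : ℝ | Complex.exp (t * Complex.I) ∈ closedBall ζ δ} ∩ Ioc 0 (2 * Real.pi) := by
    intro t ht
    have hdist : ∀ t : ℝ, |t - s| ≤ δ → Complex.exp (t * Complex.I) ∈ closedBall ζ δ := by
      intro t h
      rw [mem_closedBall, dist_eq_norm, ← hsζ]
      exact (exp_I_lip s t).trans h
    rw [hJ] at ht
    split_ifs at ht with hs
    · rcases ht with ⟨h1, h2⟩
      constructor
      · exact hdist t (by rw [abs_le]; constructor <;> linarith)
      · exact ⟨by linarith, by linarith⟩
    · push_neg at hs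
      rcases ht with ⟨h1, h2⟩
      constructor
      · exact hdist t (by rw [abs_le]; constructor <;> linarith)
      · exact ⟨by linarith, by linarith⟩
  have hvol : volume J = ENNReal.ofReal δ := by
    rw [hJ]; split_ifs <;> simp [Real.volume_Icc]
  calc ENNReal.ofReal ((2 * Real.pi)⁻¹ * δ)
      = ENNReal.ofReal (2 * Real.pi)⁻¹ * ENNReal.ofReal δ := by
        rw [ENNReal.ofReal_mul (by positivity)]
    _ ≤ ENNReal.ofReal (2 * Real.pi)⁻¹ *
        volume ({t : ℝ | Complex.exp (t * Complex.I) ∈ closedBall ζ δ} ∩ Ioc 0 (2 * Real.pi)) := by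
        gcongr
        rw [← hvol]
        exact measure_mono hJsub

lemma ae_sphere (μ : Measure ℂ) (hsupp : μ ((sphere (0:ℂ) 1)ᶜ) = 0) :
    ∀ᵐ ζ ∂μ, ζ ∈ sphere (0:ℂ) 1 := by
  have : {a : ℂ | ¬ a ∈ sphere (0:ℂ) 1} = (sphere (0:ℂ) 1)ᶜ := rfl
  rw [ae_iff, this, hsupp]

lemma kernel_integrable (μ : Measure ℂ) [IsFiniteMeasure μ]
    (hsupp : μ ((sphere (0:ℂ) 1)ᶜ) = 0) {z : ℂ} (hz : ‖z‖ < 1) :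
    Integrable (fun ζ : ℂ => (1 - ‖z‖ ^ 2) / ‖ζ - z‖ ^ 2) μ := by
  have hmeas : Measurable (fun ζ : ℂ => (1 - ‖z‖ ^ 2) / ‖ζ - z‖ ^ 2) := by
    apply Measurable.div measurable_const
    fun_prop
  refine Integrable.mono' (integrable_const ((1 - ‖z‖ ^ 2) / (1 - ‖z‖) ^ 2))
    hmeas.aestronglyMeasurable ?_
  filter_upwards [ae_sphere μ hsupp] with ζ hζ
  have hζ1 : ‖ζ‖ = 1 := by simpa using hζ
  have h1 : 1 - ‖z‖ ≤ ‖ζ - z‖ := by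
    have := norm_sub_norm_le ζ z
    rw [hζ1] at this; linarith
  have hz0 : (0:ℝ) < 1 - ‖z‖ := by linarith
  have hnum : (0:ℝ) ≤ 1 - ‖z‖ ^ 2 := by nlinarith [norm_nonneg z]
  rw [Real.norm_eq_abs, _root_.abs_of_nonneg (by positivity)]
  apply div_le_div_of_nonneg_left hnum (by positivity)
  · nlinarith

lemma key_ineq (μ : Measure ℂ) [IsFiniteMeasure μ]
    (hsupp : μ ((sphere (0:ℂ) 1)ᶜ) = 0) {ζ₀ : ℂ} (hζ₀ : ζ₀ ∈ sphere (0:ℂ) 1)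
    {δ : ℝ} (hδ0 : 0 < δ) (hδ1 : δ ≤ 1) :
    (μ (closedBall ζ₀ δ)).toReal ≤
      4 * δ * ∫ ζ : ℂ, (1 - ‖(1 - δ) • ζ₀‖ ^ 2) / ‖ζ - (1 - δ) • ζ₀‖ ^ 2 ∂μ := by
  set z : ℂ := (1 - δ) • ζ₀ with hzdef
  have hζ1 : ‖ζ₀‖ = 1 := by simpa using hζ₀
  have hznorm : ‖z‖ = 1 - δ := by
    rw [hzdef, norm_smul, Real.norm_eq_abs, hζ1, mul_one, _root_.abs_of_nonneg (by linarith)]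
  have hz : ‖z‖ < 1 := by rw [hznorm]; linarith
  have hker_nonneg : ∀ ζ : ℂ, 0 ≤ (1 - ‖z‖ ^ 2) / ‖ζ - z‖ ^ 2 := by
    intro ζ
    apply div_nonneg _ (by positivity)
    rw [hznorm]; nlinarith
  set s : Set ℂ := closedBall ζ₀ δ ∩ sphere (0:ℂ) 1 with hsdef
  have hsmeas : MeasurableSet s := measurableSet_closedBall.inter isClosed_sphere.measurableSet
  have hμs : μ (closedBall ζ₀ δ) = μ s := by
    apply le_antisymm _ (measure_mono inter_subset_left)
    calc μ (closedBall ζ₀ δ) ≤ μ (s ∪ (sphere (0:ℂ) 1)ᶜ) := by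
          apply measure_mono
          intro x hx
          by_cases h : x ∈ sphere (0:ℂ) 1
          · exact Or.inl ⟨hx, h⟩
          · exact Or.inr h
      _ ≤ μ s + μ ((sphere (0:ℂ) 1)ᶜ) := measure_union_le _ _
      _ = μ s := by rw [hsupp, add_zero]
  have hbound : ∀ ζ ∈ s, 1 / (4 * δ) ≤ (1 - ‖z‖ ^ 2) / ‖ζ - z‖ ^ 2 := by
    rintro ζ ⟨hball, hsph⟩
    have hζn : ‖ζ‖ = 1 := by simpa using hsph
    have h2 : ‖ζ - z‖ ≤ 2 * δ := by
      have h3 : ‖ζ₀ - z‖ = δ := by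
        rw [hzdef, show ζ₀ - (1 - δ) • ζ₀ = δ • ζ₀ by module, norm_smul, Real.norm_eq_abs,
          hζ1, mul_one, _root_.abs_of_pos hδ0]
      calc ‖ζ - z‖ ≤ ‖ζ - ζ₀‖ + ‖ζ₀ - z‖ := norm_sub_le_norm_sub_add_norm_sub ζ ζ₀ z
        _ ≤ δ + δ := by
            rw [h3]
            gcongr
            rw [← dist_eq_norm]
            exact hball
        _ = 2 * δ := by ring
    have hpos : (0:ℝ) < ‖ζ - z‖ := by
      have := norm_sub_norm_le ζ z
      rw [hζn, hznorm] at this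
      linarith
    have hnum : δ ≤ 1 - ‖z‖ ^ 2 := by rw [hznorm]; nlinarith
    calc (1:ℝ) / (4 * δ) = δ / (4 * δ ^ 2) := by
          field_simp
      _ ≤ (1 - ‖z‖ ^ 2) / ‖ζ - z‖ ^ 2 := by
          apply div_le_div₀ (by rw [hznorm]; nlinarith) hnum (by positivity)
          nlinarith
  have hle1 : 1 / (4 * δ) * (μ s).toReal ≤ ∫ ζ in s, (1 - ‖z‖ ^ 2) / ‖ζ - z‖ ^ 2 ∂μ := by
    apply setIntegral_ge_of_const_le_real hsmeas (measure_ne_top μ s) hbound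
    exact (kernel_integrable μ hsupp hz).integrableOn
  have hle2 : ∫ ζ in s, (1 - ‖z‖ ^ 2) / ‖ζ - z‖ ^ 2 ∂μ ≤ ∫ ζ, (1 - ‖z‖ ^ 2) / ‖ζ - z‖ ^ 2 ∂μ :=
    setIntegral_le_integral (kernel_integrable μ hsupp hz)
      (Eventually.of_forall hker_nonneg)
  rw [hμs]
  have h4δ : (0:ℝ) < 4 * δ := by linarith
  calc (μ s).toReal = (4 * δ) * (1 / (4 * δ) * (μ s).toReal) := by field_simp
    _ ≤ 4 * δ * ∫ ζ, (1 - ‖z‖ ^ 2) / ‖ζ - z‖ ^ 2 ∂μ := by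
        apply mul_le_mul_of_nonneg_left (hle1.trans hle2) h4δ.le

lemma rnDeriv_zero_of_p_tendsto_zero (μ : Measure ℂ) [IsFiniteMeasure μ] {ζ : ℂ}
    (hζ : ζ ∈ sphere (0:ℂ) 1) {p : ℝ → ℝ}
    (hp : ∀ δ ∈ Ioo (0:ℝ) 1, (μ (closedBall ζ δ)).toReal ≤ 4 * δ * p δ)
    (hp0 : ∀ δ ∈ Ioo (0:ℝ) 1, 0 ≤ p δ)
    (hP : Tendsto p (𝓝[>] (0:ℝ)) (𝓝 0))
    (hbes : Tendsto (fun δ => μ (closedBall ζ δ) / circleMeasure (closedBall ζ δ))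
      (𝓝[>] (0:ℝ)) (𝓝 (μ.rnDeriv circleMeasure ζ))) :
    μ.rnDeriv circleMeasure ζ = 0 := by
  refine tendsto_nhds_unique hbes ?_
  have hπ := Real.pi_pos
  have hub : ∀ᶠ δ in 𝓝[>] (0:ℝ), μ (closedBall ζ δ) / circleMeasure (closedBall ζ δ)
      ≤ ENNReal.ofReal (8 * Real.pi * p δ) := by
    filter_upwards [Ioo_mem_nhdsGT_of_mem (α := ℝ)
      ⟨le_refl 0, lt_min one_pos hπ⟩] with δ hδ
    obtain ⟨hδ0, hδm⟩ := hδ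
    have hδ1 : δ < 1 := hδm.trans_le (min_le_left _ _)
    have hδπ : δ ≤ Real.pi := (hδm.trans_le (min_le_right _ _)).le
    have h1 : μ (closedBall ζ δ) ≤ ENNReal.ofReal (4 * δ * p δ) := by
      rw [ENNReal.le_ofReal_iff_toReal_le (measure_ne_top μ _)
        (by have := hp0 δ ⟨hδ0, hδ1⟩; positivity)]
      exact hp δ ⟨hδ0, hδ1⟩
    have h2 := circleMeasure_closedBall_ge ζ hζ hδ0 hδπ
    calc μ (closedBall ζ δ) / circleMeasure (closedBall ζ δ)
        ≤ ENNReal.ofReal (4 * δ * p δ) / ENNReal.ofReal ((2 * Real.pi)⁻¹ * δ) :=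
          ENNReal.div_le_div h1 h2
      _ = ENNReal.ofReal ((4 * δ * p δ) / ((2 * Real.pi)⁻¹ * δ)) := by
          rw [ENNReal.ofReal_div_of_pos (by positivity)]
      _ = ENNReal.ofReal (8 * Real.pi * p δ) := by
          congr 1
          field_simp
          ring
  have hto : Tendsto (fun δ => ENNReal.ofReal (8 * Real.pi * p δ)) (𝓝[>] (0:ℝ)) (𝓝 0) := by
    have : Tendsto (fun δ => 8 * Real.pi * p δ) (𝓝[>] (0:ℝ)) (𝓝 0) := by
      simpa using hP.const_mul (8 * Real.pi)
    simpa [Function.comp_def] using (ENNReal.continuous_ofReal.tendsto 0).comp this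
  exact tendsto_of_tendsto_of_tendsto_of_le_of_le' (tendsto_const_nhds) hto
    (Eventually.of_forall fun _ => zero_le) hub

lemma p_tendsto_atTop (ν : Measure ℂ) [IsFiniteMeasure ν] {ζ : ℂ}
    (hζ : ζ ∈ sphere (0:ℂ) 1) {p : ℝ → ℝ}
    (hp : ∀ δ ∈ Ioo (0:ℝ) 1, (ν (closedBall ζ δ)).toReal ≤ 4 * δ * p δ)
    (hrat : Tendsto (fun δ => circleMeasure (closedBall ζ δ) / ν (closedBall ζ δ))
      (𝓝[>] (0:ℝ)) (𝓝 0)) :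
    Tendsto p (𝓝[>] (0:ℝ)) atTop := by
  have hπ := Real.pi_pos
  rw [Filter.tendsto_atTop]
  intro b
  set c : ℝ := max b 1 with hc
  have hcpos : 0 < c := lt_max_of_lt_right one_pos
  set e : ℝ := (2 * Real.pi)⁻¹ / (4 * c) with he
  have hepos : 0 < e := by positivity
  have hrat' : ∀ᶠ δ in 𝓝[>] (0:ℝ),
      circleMeasure (closedBall ζ δ) / ν (closedBall ζ δ) < ENNReal.ofReal e :=
    hrat.eventually_lt_const (by simpa using hepos)
  filter_upwards [hrat', Ioo_mem_nhdsGT_of_mem (α := ℝ)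
    ⟨le_refl 0, lt_min one_pos hπ⟩] with δ hlt hδ
  obtain ⟨hδ0, hδm⟩ := hδ
  have hδ1 : δ < 1 := hδm.trans_le (min_le_left _ _)
  have hδπ : δ ≤ Real.pi := (hδm.trans_le (min_le_right _ _)).le
  have hm := circleMeasure_closedBall_ge ζ hζ hδ0 hδπ
  have hν0 : ν (closedBall ζ δ) ≠ 0 := by
    intro h0
    rw [h0, ENNReal.div_zero] at hlt
    · exact (hlt.trans_le le_top).false
    · intro hm0
      rw [hm0] at hm
      simp only [nonpos_iff_eq_zero, ENNReal.ofReal_eq_zero] at hm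
      nlinarith [hm, inv_pos.2 (by linarith : (0:ℝ) < 2 * Real.pi), hδ0]
  have hνtop : ν (closedBall ζ δ) ≠ ⊤ := measure_ne_top ν _
  rw [ENNReal.div_lt_iff (Or.inl hν0) (Or.inl hνtop)] at hlt
  have h3 : ENNReal.ofReal ((2 * Real.pi)⁻¹ * δ) < ENNReal.ofReal e * ν (closedBall ζ δ) :=
    lt_of_le_of_lt hm hlt
  rw [ENNReal.ofReal_lt_iff_lt_toReal (by positivity)
    (ENNReal.mul_ne_top ENNReal.ofReal_ne_top hνtop)] at h3
  rw [ENNReal.toReal_mul, ENNReal.toReal_ofReal hepos.le] at h3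
  have h4 := hp δ ⟨hδ0, hδ1⟩
  have h5 : (2 * Real.pi)⁻¹ * δ < e * (4 * δ * p δ) := by nlinarith
  have : c < p δ := by
    rw [he] at h5
    rw [div_mul_eq_mul_div, lt_div_iff₀ (by positivity)] at h5
    nlinarith [inv_pos.2 (by linarith : (0:ℝ) < 2 * Real.pi), hδ0,
      mul_pos (inv_pos.2 (by linarith : (0:ℝ) < 2 * Real.pi)) hδ0]
  exact le_of_lt (lt_of_le_of_lt (le_max_left b 1) this)

lemma tendsto_one_sub_Ioi : Tendsto (fun δ : ℝ => 1 - δ) (𝓝[>] (0:ℝ)) (𝓝[<] (1:ℝ)) := by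
  apply tendsto_nhdsWithin_of_tendsto_nhds_of_eventually_within
  · have : Tendsto (fun δ : ℝ => 1 - δ) (𝓝 0) (𝓝 (1 - 0)) :=
      (continuous_const.sub continuous_id).tendsto 0
    simpa using this.mono_left nhdsWithin_le_nhds
  · filter_upwards [self_mem_nhdsWithin] with δ (hδ : 0 < δ)
    simp only [mem_Iio]; linarith

lemma tendsto_one_sub_Iio : Tendsto (fun r : ℝ => 1 - r) (𝓝[<] (1:ℝ)) (𝓝[>] (0:ℝ)) := by
  apply tendsto_nhdsWithin_of_tendsto_nhds_of_eventually_within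
  · have : Tendsto (fun r : ℝ => 1 - r) (𝓝 1) (𝓝 (1 - 1)) :=
      (continuous_const.sub continuous_id).tendsto 1
    simpa using this.mono_left nhdsWithin_le_nhds
  · filter_upwards [self_mem_nhdsWithin] with r (hr : r < 1)
    simp only [mem_Ioi]; linarith

lemma radial_limit_of_blowup {θ : ℂ → ℂ} {γ ζ : ℂ} (hγ : ‖γ‖ = 1)
    (hmap : ∀ z ∈ ball (0:ℂ) 1, ‖θ z‖ < 1) (hζ : ζ ∈ sphere (0:ℂ) 1)
    (hQ : Tendsto (fun r : ℝ => (1 - ‖θ (r • ζ)‖ ^ 2) / ‖γ - θ (r • ζ)‖ ^ 2)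
      (𝓝[<] (1:ℝ)) atTop) :
    Tendsto (fun r : ℝ => θ (r • ζ)) (𝓝[<] (1:ℝ)) (𝓝 γ) := by
  have hζ1 : ‖ζ‖ = 1 := by simpa using hζ
  have hmem : ∀ᶠ r in 𝓝[<] (1:ℝ), r ∈ Ioo (0:ℝ) 1 :=
    Ioo_mem_nhdsLT_of_mem ⟨zero_lt_one, le_refl 1⟩
  have hsq : ∀ᶠ r in 𝓝[<] (1:ℝ),
      ‖γ - θ (r • ζ)‖ ^ 2 ≤ ((1 - ‖θ (r • ζ)‖ ^ 2) / ‖γ - θ (r • ζ)‖ ^ 2)⁻¹ := by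
    filter_upwards [hmem, hQ.eventually_ge_atTop 1] with r hr hQ1
    have hb : ‖r • ζ‖ < 1 := by
      rw [norm_smul, Real.norm_eq_abs, hζ1, mul_one, _root_.abs_of_pos hr.1]; exact hr.2
    have hθb : ‖θ (r • ζ)‖ < 1 := hmap _ (mem_ball_zero_iff.mpr hb)
    have hd : (0:ℝ) < ‖γ - θ (r • ζ)‖ := by
      rw [norm_pos_iff, sub_ne_zero]
      intro h
      rw [← h, hγ] at hθb
      exact lt_irrefl 1 hθb
    have hnum : (0:ℝ) < 1 - ‖θ (r • ζ)‖ ^ 2 := by nlinarith [norm_nonneg (θ (r • ζ))]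
    set Q := (1 - ‖θ (r • ζ)‖ ^ 2) / ‖γ - θ (r • ζ)‖ ^ 2 with hQdef
    have hQpos : 0 < Q := by positivity
    have heq : ‖γ - θ (r • ζ)‖ ^ 2 = (1 - ‖θ (r • ζ)‖ ^ 2) / Q := by
      rw [eq_div_iff hQpos.ne', hQdef, mul_comm,
        div_mul_cancel₀ _ (by positivity : (0:ℝ) < ‖γ - θ (r • ζ)‖ ^ 2).ne']
    rw [heq, inv_eq_one_div]
    exact div_le_div₀ zero_le_one (by nlinarith [norm_nonneg (θ (r • ζ))]) hQpos le_rfl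
  have hd2 : Tendsto (fun r : ℝ => ‖γ - θ (r • ζ)‖ ^ 2) (𝓝[<] (1:ℝ)) (𝓝 0) := by
    apply squeeze_zero' (Eventually.of_forall fun r => by positivity) hsq
    exact hQ.inv_tendsto_atTop
  have hdn : Tendsto (fun r : ℝ => ‖γ - θ (r • ζ)‖) (𝓝[<] (1:ℝ)) (𝓝 0) := by
    have := hd2.sqrt
    simp only [Real.sqrt_sq (norm_nonneg _), Real.sqrt_zero] at this
    exact this
  rw [tendsto_iff_dist_tendsto_zero]
  simpa only [dist_eq_norm, norm_sub_rev] using hdn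

/-- Set of boundary points where the "rational radial limit" of `θ` is `α`. -/
def radSet (θ : ℂ → ℂ) (α : ℂ) : Set ℂ :=
  sphere (0:ℂ) 1 ∩ ⋂ (n : ℕ), ⋃ (q : ℚ) (_ : 0 < q ∧ q < 1), ⋂ (p : ℚ) (_ : q < p ∧ p < 1),
    (sphere (0:ℂ) 1 ∩ {ζ : ℂ | ‖θ ((p : ℝ) • ζ) - α‖ ≤ 1 / (n + 1)})

lemma radSet_measurable (θ : ℂ → ℂ) (hθ : DifferentiableOn ℂ θ (ball (0 : ℂ) 1)) (α : ℂ) :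
    MeasurableSet (radSet θ α) := by
  apply (isClosed_sphere.measurableSet).inter
  apply MeasurableSet.iInter; intro n
  apply MeasurableSet.iUnion; intro q
  apply MeasurableSet.iUnion; intro hq
  apply MeasurableSet.iInter; intro p
  apply MeasurableSet.iInter; intro hp
  have hp0 : (0:ℝ) < (p:ℝ) := by
    have : (0:ℚ) < p := hq.1.trans hp.1
    exact_mod_cast this
  have hp1 : (p:ℝ) < 1 := by exact_mod_cast hp.2
  set U : Set ℂ := ball (0:ℂ) ((p:ℝ))⁻¹ with hU
  have hSU : sphere (0:ℂ) 1 ⊆ U := by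
    intro ζ hζ
    have : ‖ζ‖ = 1 := by simpa using hζ
    rw [hU, mem_ball_zero_iff, this]
    rw [lt_inv_comm₀] <;> simp [hp0, hp1]
  have hg : ContinuousOn (fun ζ : ℂ => θ ((p : ℝ) • ζ)) U := by
    apply hθ.continuousOn.comp (continuous_const_smul ((p:ℝ))).continuousOn
    intro ζ hζ
    rw [mem_ball_zero_iff] at hζ ⊢
    rw [norm_smul, Real.norm_eq_abs, _root_.abs_of_pos hp0]
    calc (p:ℝ) * ‖ζ‖ < (p:ℝ) * (p:ℝ)⁻¹ := by
          apply mul_lt_mul_of_pos_left hζ hp0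
      _ = 1 := mul_inv_cancel₀ hp0.ne'
  have hkey : sphere (0:ℂ) 1 ∩ {ζ : ℂ | ‖θ ((p : ℝ) • ζ) - α‖ ≤ 1 / (n + 1)}
      = sphere (0:ℂ) 1 ∩ (U \ (U ∩ (fun ζ : ℂ => θ ((p : ℝ) • ζ)) ⁻¹' (closedBall α (1 / (n + 1)))ᶜ)) := by
    ext ζ
    simp only [mem_inter_iff, mem_setOf_eq, mem_diff, mem_preimage, mem_compl_iff,
      mem_closedBall, dist_eq_norm]
    constructor
    · rintro ⟨h1, h2⟩
      exact ⟨h1, hSU h1, fun h => h.2 h2⟩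
    · rintro ⟨h1, hu, h2⟩
      refine ⟨h1, ?_⟩
      by_contra h3
      exact h2 ⟨hu, fun h => h3 h⟩
  rw [hkey]
  apply isClosed_sphere.measurableSet.inter
  apply (isOpen_ball.measurableSet).diff
  exact (hg.isOpen_inter_preimage isOpen_ball
    ((Metric.isClosed_closedBall (x := α)).isOpen_compl)).measurableSet

lemma mem_radSet_of_tendsto {θ : ℂ → ℂ} {α ζ : ℂ} (hζ : ζ ∈ sphere (0:ℂ) 1)
    (h : Tendsto (fun r : ℝ => θ (r • ζ)) (𝓝[<] (1:ℝ)) (𝓝 α)) : ζ ∈ radSet θ α := by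
  refine ⟨hζ, ?_⟩
  rw [mem_iInter]
  intro n
  have hev : ∀ᶠ r in 𝓝[<] (1:ℝ), ‖θ (r • ζ) - α‖ < 1 / (n + 1) := by
    have : ∀ᶠ w in 𝓝 α, ‖w - α‖ < 1 / (n + 1) := by
      have : Metric.ball α (1 / (n + 1)) ∈ 𝓝 α := ball_mem_nhds α (by positivity)
      filter_upwards [this] with w hw
      rwa [mem_ball, dist_eq_norm] at hw
    exact h.eventually this
  obtain ⟨l, hl, hsub⟩ := mem_nhdsLT_iff_exists_Ioo_subset.mp hev
  rw [mem_Iio] at hl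
  obtain ⟨q, hq1, hq2⟩ := exists_rat_btwn (max_lt hl one_pos : max l 0 < 1)
  have hq0 : (0:ℚ) < q := by
    have : (0:ℝ) < (q:ℝ) := lt_of_le_of_lt (le_max_right l 0) hq1
    exact_mod_cast this
  have hq1' : q < 1 := by exact_mod_cast hq2
  apply mem_iUnion.mpr
  refine ⟨q, mem_iUnion.mpr ⟨⟨hq0, hq1'⟩, ?_⟩⟩
  rw [mem_iInter]
  intro p
  rw [mem_iInter]
  rintro ⟨hp1, hp2⟩
  refine ⟨hζ, ?_⟩
  have hpIoo : (p:ℝ) ∈ Ioo l 1 := by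
    constructor
    · have h1 : l ≤ max l 0 := le_max_left l 0
      have h2 : ((q:ℚ):ℝ) < ((p:ℚ):ℝ) := by exact_mod_cast hp1
      linarith
    · exact_mod_cast hp2
  simp only [mem_setOf_eq]
  exact le_of_lt (hsub hpIoo)

lemma eq_of_mem_radSet {θ : ℂ → ℂ} {α ζ L : ℂ} (hζ : ζ ∈ radSet θ α)
    (h : Tendsto (fun r : ℝ => θ (r • ζ)) (𝓝[<] (1:ℝ)) (𝓝 L)) : L = α := by
  obtain ⟨hζS, hmem⟩ := hζ
  rw [mem_iInter] at hmem
  have key : ∀ n : ℕ, ‖L - α‖ ≤ 1 / (n + 1) := by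
    intro n
    obtain ⟨q, hq⟩ := mem_iUnion.mp (hmem n)
    obtain ⟨⟨hq0, hq1⟩, hq2⟩ := mem_iUnion.mp hq
    set pk : ℕ → ℚ := fun k => 1 - (1 - q) / (k + 2) with hpk
    have hpk_lt : ∀ k, pk k < 1 := by
      intro k
      rw [hpk]
      have : (0:ℚ) < (1 - q) / (k + 2) := by
        apply div_pos (by linarith) (by positivity)
      simp only []
      linarith
    have hpk_gt : ∀ k, q < pk k := by
      intro k
      rw [hpk]
      simp only []
      have h2 : ((k:ℚ) + 2) ≥ 2 := by
        have : (0:ℚ) ≤ (k:ℚ) := by positivity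
        linarith
      have : (1 - q) / (k + 2) < 1 - q := by
        apply div_lt_self (by linarith) (by linarith)
      linarith
    have hbound : ∀ k, ‖θ ((pk k : ℝ) • ζ) - α‖ ≤ 1 / (n + 1) := by
      intro k
      have := mem_iInter.mp hq2 (pk k)
      have h2 := mem_iInter.mp this ⟨hpk_gt k, hpk_lt k⟩
      exact h2.2
    have htend : Tendsto (fun k : ℕ => ((pk k : ℚ) : ℝ)) atTop (𝓝[<] (1:ℝ)) := by
      apply tendsto_nhdsWithin_of_tendsto_nhds_of_eventually_within
      · have : Tendsto (fun k : ℕ => 1 - (1 - (q:ℝ)) / (k + 2)) atTop (𝓝 (1 - 0)) := by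
          apply tendsto_const_nhds.sub
          apply Tendsto.div_atTop tendsto_const_nhds
          exact tendsto_atTop_add_const_right atTop 2 tendsto_natCast_atTop_atTop
        have heq : (fun k : ℕ => ((pk k : ℚ) : ℝ)) = fun k : ℕ => 1 - (1 - (q:ℝ)) / (k + 2) := by
          funext k
          rw [hpk]
          push_cast
          ring
        rw [heq]
        simpa using this
      · apply Eventually.of_forall
        intro k
        have := hpk_lt k
        simp only [mem_Iio]
        exact_mod_cast this
    have hθtend : Tendsto (fun k : ℕ => θ ((pk k : ℝ) • ζ)) atTop (𝓝 L) := h.comp htend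
    have hnorm : Tendsto (fun k : ℕ => ‖θ ((pk k : ℝ) • ζ) - α‖) atTop (𝓝 ‖L - α‖) :=
      (hθtend.sub tendsto_const_nhds).norm
    exact le_of_tendsto hnorm (Eventually.of_forall hbound)
  have h0 : ‖L - α‖ ≤ 0 := by
    apply ge_of_tendsto (tendsto_one_div_add_atTop_nhds_zero_nat)
    filter_upwards [Eventually.of_forall key] with n hn
    exact_mod_cast hn
  have : ‖L - α‖ = 0 := le_antisymm h0 (norm_nonneg _)
  rwa [norm_eq_zero, sub_eq_zero] at this

end ClarkAux

/-- For an inner function `θ`, the Clark measures `μ_α` and `μ_β` associated with two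
distinct points `α ≠ β` of the unit circle are mutually singular. -/
theorem clark_measures_mutuallySingular
    (θ : ℂ → ℂ) (hθ : DifferentiableOn ℂ θ (ball (0 : ℂ) 1))
    (hmap : ∀ z ∈ ball (0 : ℂ) 1, ‖θ z‖ < 1)
    (hinner : ∀ᵐ ζ ∂circleMeasure, ∃ L : ℂ, ‖L‖ = 1 ∧
      Tendsto (fun r : ℝ => θ (r • ζ)) (𝓝[<] (1 : ℝ)) (𝓝 L))
    (α β : ℂ) (hα : α ∈ sphere (0 : ℂ) 1) (hβ : β ∈ sphere (0 : ℂ) 1) (hαβ : α ≠ β)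
    (μa μb : Measure ℂ) [IsFiniteMeasure μa] [IsFiniteMeasure μb]
    (hsuppa : μa ((sphere (0 : ℂ) 1)ᶜ) = 0) (hsuppb : μb ((sphere (0 : ℂ) 1)ᶜ) = 0)
    (hPoissona : ∀ z ∈ ball (0 : ℂ) 1,
      (1 - ‖θ z‖ ^ 2) / ‖α - θ z‖ ^ 2 = ∫ ζ : ℂ, (1 - ‖z‖ ^ 2) / ‖ζ - z‖ ^ 2 ∂μa)
    (hPoissonb : ∀ z ∈ ball (0 : ℂ) 1,
      (1 - ‖θ z‖ ^ 2) / ‖β - θ z‖ ^ 2 = ∫ ζ : ℂ, (1 - ‖z‖ ^ 2) / ‖ζ - z‖ ^ 2 ∂μb) :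
    μa.MutuallySingular μb := by
  -- abbreviation for the Poisson quotient at the point `(1-δ)•ζ`
  set S := sphere (0:ℂ) 1 with hS
  have hβ1 : ‖β‖ = 1 := mem_sphere_zero_iff_norm.mp hβ
  have hα1 : ‖α‖ = 1 := mem_sphere_zero_iff_norm.mp hα
  -- generic facts used repeatedly
  have hz_ball : ∀ (ζ : ℂ), ζ ∈ S → ∀ δ ∈ Ioo (0:ℝ) 1, (1 - δ) • ζ ∈ ball (0:ℂ) 1 := by
    intro ζ hζ δ hδ
    have hζ1 : ‖ζ‖ = 1 := by simpa [hS] using hζ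
    rw [mem_ball_zero_iff, norm_smul, Real.norm_eq_abs, hζ1, mul_one,
      _root_.abs_of_nonneg (by linarith [hδ.2] : (0:ℝ) ≤ 1 - δ)]
    linarith [hδ.1]
  -- the Poisson quotient functions
  -- `pγ μ γ ζ δ = (1-‖θ((1-δ)ζ)‖²)/‖γ-θ((1-δ)ζ)‖²`
  set pfun : ℂ → ℂ → ℝ → ℝ := fun γ ζ δ =>
    (1 - ‖θ ((1 - δ) • ζ)‖ ^ 2) / ‖γ - θ ((1 - δ) • ζ)‖ ^ 2 with hpfun
  have hp_nonneg : ∀ (γ ζ : ℂ), ζ ∈ S → ∀ δ ∈ Ioo (0:ℝ) 1, 0 ≤ pfun γ ζ δ := by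
    intro γ ζ hζ δ hδ
    have := hmap _ (hz_ball ζ hζ δ hδ)
    apply div_nonneg _ (by positivity)
    nlinarith [norm_nonneg (θ ((1 - δ) • ζ))]
  -- the key inequality specialized
  have hp_ineq : ∀ (γ : ℂ) (μ : Measure ℂ), ∀ (_ : IsFiniteMeasure μ),
      μ (Sᶜ) = 0 →
      (∀ z ∈ ball (0:ℂ) 1,
        (1 - ‖θ z‖ ^ 2) / ‖γ - θ z‖ ^ 2 = ∫ ζ : ℂ, (1 - ‖z‖ ^ 2) / ‖ζ - z‖ ^ 2 ∂μ) →
      ∀ (ζ : ℂ), ζ ∈ S → ∀ δ ∈ Ioo (0:ℝ) 1,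
      (μ (closedBall ζ δ)).toReal ≤ 4 * δ * pfun γ ζ δ := by
    intro γ μ hfin hsupp hPoisson ζ hζ δ hδ
    have h1 : pfun γ ζ δ = ∫ x : ℂ, (1 - ‖(1 - δ) • ζ‖ ^ 2) / ‖x - (1 - δ) • ζ‖ ^ 2 ∂μ :=
      hPoisson _ (hz_ball ζ hζ δ hδ)
    rw [h1]
    exact key_ineq μ hsupp hζ hδ.1 hδ.2.le
  -- part 1: the a.c. (w.r.t. circleMeasure) part of a Clark measure vanishes off its radial set
  have hac : ∀ (γ : ℂ), ‖γ‖ = 1 → ∀ (μ : Measure ℂ), ∀ (_ : IsFiniteMeasure μ),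
      ∀ (_ : μ (Sᶜ) = 0),
      (∀ z ∈ ball (0:ℂ) 1,
        (1 - ‖θ z‖ ^ 2) / ‖γ - θ z‖ ^ 2 = ∫ ζ : ℂ, (1 - ‖z‖ ^ 2) / ‖ζ - z‖ ^ 2 ∂μ) →
      ∀ᵐ ζ ∂circleMeasure, ∀ L : ℂ, ‖L‖ = 1 → L ≠ γ →
        Tendsto (fun r : ℝ => θ (r • ζ)) (𝓝[<] (1:ℝ)) (𝓝 L) →
        μ.rnDeriv circleMeasure ζ = 0 := by
    intro γ hγ1 μ hfin hsupp hPoisson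
    filter_upwards [Besicovitch.ae_tendsto_rnDeriv μ circleMeasure,
      ae_sphere circleMeasure circleMeasure_compl_sphere] with ζ hbes hζS L hL1 hLγ hLt
    apply rnDeriv_zero_of_p_tendsto_zero μ hζS
      (hp_ineq γ μ hfin hsupp hPoisson ζ hζS) (hp_nonneg γ ζ hζS) ?_ hbes
    have hθδ : Tendsto (fun δ : ℝ => θ ((1 - δ) • ζ)) (𝓝[>] (0:ℝ)) (𝓝 L) :=
      hLt.comp tendsto_one_sub_Ioi
    have hg : ContinuousAt (fun w : ℂ => (1 - ‖w‖ ^ 2) / ‖γ - w‖ ^ 2) L := by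
      apply ContinuousAt.div (by fun_prop) (by fun_prop)
      have hne : γ - L ≠ 0 := sub_ne_zero.mpr (Ne.symm hLγ)
      simpa using pow_ne_zero 2 (norm_ne_zero_iff.mpr hne)
    have hcomp : Tendsto (fun δ : ℝ => pfun γ ζ δ) (𝓝[>] (0:ℝ))
        (𝓝 ((1 - ‖L‖ ^ 2) / ‖γ - L‖ ^ 2)) := by
      have := hg.tendsto.comp hθδ
      exact this
    have h0 : (1 - ‖L‖ ^ 2) / ‖γ - L‖ ^ 2 = 0 := by
      rw [hL1]; norm_num
    rw [h0] at hcomp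
    exact hcomp
  -- part 2: the singular part of a Clark measure is carried by the radial set
  have hsing : ∀ (γ : ℂ), ‖γ‖ = 1 → ∀ (μ : Measure ℂ), ∀ (_ : IsFiniteMeasure μ),
      ∀ (hsupp : μ (Sᶜ) = 0),
      (∀ z ∈ ball (0:ℂ) 1,
        (1 - ‖θ z‖ ^ 2) / ‖γ - θ z‖ ^ 2 = ∫ ζ : ℂ, (1 - ‖z‖ ^ 2) / ‖ζ - z‖ ^ 2 ∂μ) →
      ∀ᵐ ζ ∂(μ.singularPart circleMeasure),
        Tendsto (fun r : ℝ => θ (r • ζ)) (𝓝[<] (1:ℝ)) (𝓝 γ) := by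
    intro γ hγ1 μ hfin hsupp hPoisson
    have hσle : ∀ t : Set ℂ, (μ.singularPart circleMeasure) t ≤ μ t := fun t =>
      Measure.le_iff'.mp (Measure.singularPart_le μ circleMeasure) t
    have hσS : (μ.singularPart circleMeasure) (Sᶜ) = 0 :=
      le_antisymm ((hσle _).trans hsupp.le) zero_le
    filter_upwards [Besicovitch.ae_tendsto_rnDeriv circleMeasure (μ.singularPart circleMeasure),
      ((Measure.mutuallySingular_singularPart μ circleMeasure).symm).rnDeriv_ae_eq_zero,
      ae_sphere _ hσS] with ζ hbes h0 hζS
    have h0' : circleMeasure.rnDeriv (μ.singularPart circleMeasure) ζ = 0 := h0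
    rw [h0'] at hbes
    have hineq : ∀ δ ∈ Ioo (0:ℝ) 1,
        ((μ.singularPart circleMeasure) (closedBall ζ δ)).toReal ≤ 4 * δ * pfun γ ζ δ := by
      intro δ hδ
      refine le_trans (ENNReal.toReal_mono (measure_ne_top μ _) (hσle _)) ?_
      exact hp_ineq γ μ hfin hsupp hPoisson ζ hζS δ hδ
    have hptop : Tendsto (pfun γ ζ) (𝓝[>] (0:ℝ)) atTop :=
      p_tendsto_atTop (μ.singularPart circleMeasure) hζS hineq hbes
    have hQ : Tendsto (fun r : ℝ => (1 - ‖θ (r • ζ)‖ ^ 2) / ‖γ - θ (r • ζ)‖ ^ 2)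
        (𝓝[<] (1:ℝ)) atTop := by
      have hcp := hptop.comp tendsto_one_sub_Iio
      have heq : (pfun γ ζ ∘ fun r : ℝ => 1 - r)
          = fun r : ℝ => (1 - ‖θ (r • ζ)‖ ^ 2) / ‖γ - θ (r • ζ)‖ ^ 2 := by
        funext r
        simp only [Function.comp_apply, hpfun, sub_sub_cancel]
      rwa [heq] at hcp
    exact radial_limit_of_blowup hγ1 hmap hζS hQ
  -- the radial set of `α`
  set A := radSet θ α with hA
  have hAme : MeasurableSet A := radSet_measurable θ hθ α
  -- a generic vanishing lemma for each part
  have hzero : ∀ (μ : Measure ℂ), ∀ (_ : IsFiniteMeasure μ), ∀ (t : Set ℂ),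
      MeasurableSet t →
      (∀ᵐ ζ ∂circleMeasure, ζ ∈ t → μ.rnDeriv circleMeasure ζ = 0) →
      (∀ᵐ ζ ∂(μ.singularPart circleMeasure), ζ ∉ t) →
      μ t = 0 := by
    intro μ hfin t htme hwd hsg
    have hdec := μ.haveLebesgueDecomposition_add circleMeasure
    have happ : μ t = (μ.singularPart circleMeasure) t
        + (circleMeasure.withDensity (μ.rnDeriv circleMeasure)) t := by
      conv_lhs => rw [hdec]
      rfl
    rw [happ]
    have h1 : (μ.singularPart circleMeasure) t = 0 := by
      have : {ζ : ℂ | ¬ ζ ∉ t} = t := by ext ζ; simp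
      have h2 := hsg
      rw [ae_iff] at h2
      rwa [this] at h2
    have h2 : (circleMeasure.withDensity (μ.rnDeriv circleMeasure)) t = 0 := by
      rw [withDensity_apply _ htme]
      have hres : ∀ᵐ ζ ∂(circleMeasure.restrict t), μ.rnDeriv circleMeasure ζ = 0 :=
        (ae_restrict_iff' htme).2 hwd
      calc ∫⁻ ζ in t, μ.rnDeriv circleMeasure ζ ∂circleMeasure
          = ∫⁻ _ in t, 0 ∂circleMeasure := lintegral_congr_ae hres
        _ = 0 := by simp
    rw [h1, h2, add_zero]
  -- μa vanishes off A
  have hμa : μa Aᶜ = 0 := by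
    apply hzero μa inferInstance Aᶜ hAme.compl
    · filter_upwards [hinner, hac α hα1 μa inferInstance hsuppa hPoissona,
        ae_sphere circleMeasure circleMeasure_compl_sphere] with ζ hL hz hζS hmem
      obtain ⟨L, hL1, hLt⟩ := hL
      have hLα : L ≠ α := by
        rintro rfl
        exact hmem (mem_radSet_of_tendsto hζS hLt)
      exact hz L hL1 hLα hLt
    · filter_upwards [hsing α hα1 μa inferInstance hsuppa hPoissona,
        ae_sphere _ (le_antisymm
          ((Measure.le_iff'.mp (Measure.singularPart_le μa circleMeasure) _).trans hsuppa.le)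
          zero_le)] with ζ ht hζS
      simp only [mem_compl_iff, not_not]
      exact mem_radSet_of_tendsto hζS ht
  -- μb vanishes on A
  have hμb : μb A = 0 := by
    apply hzero μb inferInstance A hAme
    · filter_upwards [hinner, hac β hβ1 μb inferInstance hsuppb hPoissonb] with ζ hL hz hmem
      obtain ⟨L, hL1, hLt⟩ := hL
      have hLα : L = α := eq_of_mem_radSet hmem hLt
      have hLβ : L ≠ β := by rw [hLα]; exact hαβ
      exact hz L hL1 hLβ hLt
    · filter_upwards [hsing β hβ1 μb inferInstance hsuppb hPoissonb] with ζ ht hmem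
      have : β = α := eq_of_mem_radSet hmem ht
      exact hαβ this.symm
  exact ⟨Aᶜ, hAme.compl, hμa, by rwa [compl_compl]⟩
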